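/- arXiv:1003.4595 — 2 statements merged into one kernel-verified Lean document; each statement's English description precedes it below -/
import Mathlib

section
/- Let μ be a fuzzy set of an MTL-algebra L. Then for every t ∈ (0, 0.5] the q-level set F_q(t) = {x ∈ L : μ(x) + t > 1} is either empty or a Boolean filter of L if and only if μ is an (∈̄,∈̄∨q̄)-fuzzy Boolean filter of L. -/
/-- An MTL-algebra: a bounded lattice with `⊥ ≠ ⊤`, a product `odot` and residuum `rimp`,
where `odot` is associative, commutative and monotone in each argument, `⊤` is a unit,
the Galois correspondence holds and prelinearity holds. -/
class MTL (L : Type*) extends Lattice L, BoundedOrder L where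
  odot : L → L → L
  rimp : L → L → L
  bot_ne_top : (⊥ : L) ≠ ⊤
  odot_assoc : ∀ x y z : L, odot (odot x y) z = odot x (odot y z)
  odot_comm : ∀ x y : L, odot x y = odot y x
  odot_mono_left : ∀ x y z : L, x ≤ y → odot x z ≤ odot y z
  odot_mono_right : ∀ x y z : L, x ≤ y → odot z x ≤ odot z y
  odot_top : ∀ x : L, odot x ⊤ = x
  galois : ∀ x y z : L, odot x y ≤ z ↔ x ≤ rimp y z
  prelinear : ∀ x y : L, rimp x y ⊔ rimp y x = ⊤

open MTL

variable {L : Type*} [MTL L]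

/-- A subset `A` is a filter: `1 ∈ A` and it is closed under modus ponens. -/
def IsFilter' (A : Set L) : Prop :=
  (⊤ : L) ∈ A ∧ ∀ x y : L, x ∈ A → rimp x y ∈ A → y ∈ A

/-- An (∈̄,∈̄∨q̄)-fuzzy filter: `max(μ(1), 0.5) ≥ μ(x)` and
`max(μ(y), 0.5) ≥ min(μ(x → y), μ(x))`. -/
def IsBarFuzzyFilter (μ : L → ℝ) : Prop :=
  (∀ x : L, max (μ ⊤) (1/2) ≥ μ x) ∧
    ∀ x y : L, max (μ y) (1/2) ≥ min (μ (rimp x y)) (μ x)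

/-- A Boolean filter: a filter containing `x ∨ x'` for all `x`, where `x' = x → 0`. -/
def IsBooleanFilter (A : Set L) : Prop :=
  IsFilter' A ∧ ∀ x : L, x ⊔ rimp x ⊥ ∈ A

/-- An (∈̄,∈̄∨q̄)-fuzzy Boolean filter:
`max(μ(x → z), 0.5) ≥ min(μ(x → (z' → y)), μ(y → z))`. -/
def IsBarFuzzyBooleanFilter (μ : L → ℝ) : Prop :=
  IsBarFuzzyFilter μ ∧
    ∀ x y z : L, max (μ (rimp x z)) (1/2) ≥
      min (μ (rimp x (rimp (rimp z ⊥) y))) (μ (rimp y z))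

lemma top_odot (a : L) : odot ⊤ a = a := by rw [odot_comm]; exact odot_top a

lemma odot_rimp_le (a b : L) : odot (rimp a b) a ≤ b :=
  (galois _ _ _).mpr le_rfl

lemma rimp_eq_top {a b : L} (h : a ≤ b) : rimp a b = ⊤ :=
  le_antisymm le_top ((galois ⊤ a b).mp (by rw [top_odot]; exact h))

lemma rimp_top (a : L) : rimp ⊤ a = a := by
  apply le_antisymm
  · have := odot_rimp_le ⊤ a; rwa [odot_top] at this
  · exact (galois a ⊤ a).mp (by rw [odot_top])

lemma rimp_anti {a b : L} (c : L) (h : a ≤ b) : rimp b c ≤ rimp a c :=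
  (galois _ _ _).mp (le_trans (odot_mono_right a b _ h) (odot_rimp_le b c))

lemma filter_mem_of_le {A : Set L} (hA : IsFilter' A) {a b : L}
    (ha : a ∈ A) (h : a ≤ b) : b ∈ A :=
  hA.2 a b ha (by rw [rimp_eq_top h]; exact hA.1)

lemma filter_odot_mem {A : Set L} (hA : IsFilter' A) {a b : L}
    (ha : a ∈ A) (hb : b ∈ A) : odot a b ∈ A := by
  have h1 : b ≤ rimp a (odot a b) := (galois b a _).mp (odot_comm b a).le
  exact hA.2 a _ ha (filter_mem_of_le hA hb h1)

lemma boolean_key {A : Set L} (hA : IsBooleanFilter A) (x y z : L)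
    (h1 : rimp x (rimp (rimp z ⊥) y) ∈ A) (h2 : rimp y z ∈ A) : rimp x z ∈ A := by
  set p : L := rimp x (rimp (rimp z ⊥) y) with hp
  set q : L := rimp y z with hq
  set z' : L := rimp z ⊥ with hz'
  set w : L := rimp x z with hw
  -- main product inequality
  have hpx : odot p x ≤ rimp z' y := (galois p x _).mpr le_rfl
  have h3 : odot (odot p x) z' ≤ y :=
    le_trans (odot_mono_left _ _ z' hpx) (odot_rimp_le z' y)
  have h4 : odot (odot (odot p x) z') q ≤ z := by
    calc odot (odot (odot p x) z') q ≤ odot y q := odot_mono_left _ _ q h3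
      _ = odot q y := odot_comm _ _
      _ ≤ z := odot_rimp_le y z
  have hpq : odot p q ∈ A := filter_odot_mem hA.1 h1 h2
  have e : odot q (odot z' x) = odot x (odot z' q) := by
    rw [odot_comm z' x, ← odot_assoc, odot_comm q x, odot_assoc, odot_comm q z']
  have hac : odot (odot (odot p q) z') x = odot (odot (odot p x) z') q := by
    rw [odot_assoc p q z', odot_assoc p (odot q z') x, odot_assoc q z' x,
      odot_assoc p x z', odot_assoc p (odot x z') q, odot_assoc x z' q, e]
  have h5 : odot p q ≤ rimp z' w := by
    apply (galois _ _ _).mp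
    apply (galois _ _ _).mp
    rw [hac]
    exact h4
  have hr : rimp z' w ∈ A := filter_mem_of_le hA.1 hpq h5
  have hzw : z ≤ w := (galois z x z).mp
    (le_trans (odot_mono_right x ⊤ z le_top) (odot_top z).le)
  have hsup_le : z ⊔ z' ≤ rimp (rimp z' w) w := by
    apply sup_le
    · exact (galois z (rimp z' w) w).mp
        (le_trans (odot_mono_right _ ⊤ z le_top) ((odot_top z).le.trans hzw))
    · exact (galois z' (rimp z' w) w).mp (by rw [odot_comm]; exact odot_rimp_le z' w)
  have h6 : rimp z' w ≤ rimp (z ⊔ z') w := by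
    apply (galois _ _ _).mp
    rw [odot_comm]
    exact (galois _ _ _).mpr hsup_le
  have hsup : rimp (z ⊔ z') w ∈ A := filter_mem_of_le hA.1 hr h6
  exact hA.1.2 _ _ (hA.2 z) hsup

theorem stmt_11 (μ : L → ℝ) (hμ0 : ∀ x : L, 0 ≤ μ x) (hμ1 : ∀ x : L, μ x ≤ 1) :
    (∀ t : ℝ, 0 < t → t ≤ 1/2 → ({x : L | 1 < μ x + t} = ∅ ∨ IsBooleanFilter {x : L | 1 < μ x + t})) ↔ IsBarFuzzyBooleanFilter μ := by
  constructor
  · intro h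
    refine ⟨⟨?_, ?_⟩, ?_⟩
    · intro x
      by_contra hc
      push_neg at hc
      set t : ℝ := 1 - max (μ ⊤) (1/2) with ht
      have hm1 : (1:ℝ)/2 ≤ max (μ ⊤) (1/2) := le_max_right _ _
      have hm2 : μ ⊤ ≤ max (μ ⊤) (1/2) := le_max_left _ _
      have ht0 : 0 < t := by have := hμ1 x; rw [ht]; linarith
      have ht2 : t ≤ 1/2 := by rw [ht]; linarith
      rcases h t ht0 ht2 with he | hb
      · have hx : x ∈ {x : L | 1 < μ x + t} := by
          simp only [Set.mem_setOf_eq, ht]; linarith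
        rw [he] at hx; exact hx
      · have htop := hb.1.1
        simp only [Set.mem_setOf_eq, ht] at htop
        linarith
    · intro x y
      by_contra hc
      push_neg at hc
      set t : ℝ := 1 - max (μ y) (1/2) with ht
      have hm1 : (1:ℝ)/2 ≤ max (μ y) (1/2) := le_max_right _ _
      have hm2 : μ y ≤ max (μ y) (1/2) := le_max_left _ _
      have hminl : min (μ (rimp x y)) (μ x) ≤ μ (rimp x y) := min_le_left _ _
      have hminr : min (μ (rimp x y)) (μ x) ≤ μ x := min_le_right _ _
      have ht0 : 0 < t := by have := hμ1 x; rw [ht]; linarith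
      have ht2 : t ≤ 1/2 := by rw [ht]; linarith
      rcases h t ht0 ht2 with he | hb
      · have hx : x ∈ {x : L | 1 < μ x + t} := by
          simp only [Set.mem_setOf_eq, ht]; linarith
        rw [he] at hx; exact hx
      · have hx : x ∈ {x : L | 1 < μ x + t} := by
          simp only [Set.mem_setOf_eq, ht]; linarith
        have hxy : rimp x y ∈ {x : L | 1 < μ x + t} := by
          simp only [Set.mem_setOf_eq, ht]; linarith
        have hy := hb.1.2 x y hx hxy
        simp only [Set.mem_setOf_eq, ht] at hy
        linarith
    · intro x y z
      by_contra hc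
      push_neg at hc
      set t : ℝ := 1 - max (μ (rimp x z)) (1/2) with ht
      have hm1 : (1:ℝ)/2 ≤ max (μ (rimp x z)) (1/2) := le_max_right _ _
      have hm2 : μ (rimp x z) ≤ max (μ (rimp x z)) (1/2) := le_max_left _ _
      have hminl : min (μ (rimp x (rimp (rimp z ⊥) y))) (μ (rimp y z)) ≤
          μ (rimp x (rimp (rimp z ⊥) y)) := min_le_left _ _
      have hminr : min (μ (rimp x (rimp (rimp z ⊥) y))) (μ (rimp y z)) ≤
          μ (rimp y z) := min_le_right _ _
      have ht0 : 0 < t := by have := hμ1 (rimp y z); rw [ht]; linarith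
      have ht2 : t ≤ 1/2 := by rw [ht]; linarith
      rcases h t ht0 ht2 with he | hb
      · have hx : rimp y z ∈ {x : L | 1 < μ x + t} := by
          simp only [Set.mem_setOf_eq, ht]; linarith
        rw [he] at hx; exact hx
      · have h1 : rimp x (rimp (rimp z ⊥) y) ∈ {x : L | 1 < μ x + t} := by
          simp only [Set.mem_setOf_eq, ht]; linarith
        have h2 : rimp y z ∈ {x : L | 1 < μ x + t} := by
          simp only [Set.mem_setOf_eq, ht]; linarith
        have h3 := boolean_key hb x y z h1 h2
        simp only [Set.mem_setOf_eq, ht] at h3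
        linarith
  · intro hμ t ht0 ht2
    by_cases hS : {x : L | 1 < μ x + t} = ∅
    · left; exact hS
    · right
      obtain ⟨a, ha⟩ := Set.nonempty_iff_ne_empty.mpr hS
      simp only [Set.mem_setOf_eq] at ha
      have htop : 1 < μ ⊤ + t := by
        have h1 := hμ.1.1 a
        rcases max_choice (μ ⊤) (1/2) with h | h <;> rw [h] at h1 <;> linarith
      have hfil : IsFilter' {x : L | 1 < μ x + t} := by
        refine ⟨htop, ?_⟩
        intro x y hx hxy
        simp only [Set.mem_setOf_eq] at hx hxy ⊢
        have h1 := hμ.1.2 x y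
        have hminl : min (μ (rimp x y)) (μ x) ≤ μ (rimp x y) := min_le_left _ _
        rcases max_choice (μ y) (1/2) with h | h <;> rw [h] at h1
        · have := min_le_right (μ (rimp x y)) (μ x)
          have hmin : 1 - t < min (μ (rimp x y)) (μ x) :=
            lt_min (by linarith) (by linarith)
          linarith
        · have hmin : 1 - t < min (μ (rimp x y)) (μ x) :=
            lt_min (by linarith) (by linarith)
          linarith
      refine ⟨hfil, ?_⟩
      intro x
      set z : L := x ⊔ rimp x ⊥ with hz
      have hz' : rimp z ⊥ ≤ z := le_trans (rimp_anti ⊥ le_sup_left) le_sup_right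
      have h1 := hμ.2 ⊤ (rimp z ⊥) z
      rw [rimp_top, rimp_top, rimp_eq_top (le_refl (rimp z ⊥)),
        rimp_eq_top hz'] at h1
      simp only [min_self] at h1
      show 1 < μ z + t
      rcases max_choice (μ z) (1/2) with h | h <;> rw [h] at h1 <;> linarith
end

section
/- Let L be an MTL-algebra and let A ⊆ L. Then A is a Boolean filter of L if and only if A is both an MV-filter of L and a G-filter of L. Consequently, for a fuzzy set μ of L and 0 < α < β ≤ 1, every ∈-level set F(t) = {x ∈ L : μ(x) ≥ t} with t ∈ (α, β] is empty or a Boolean filter of L if and only if every such level set is empty or an MV-filter of L and empty or a G-filter of L. -/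
open MTL

variable {L : Type*} [MTL L]

/-- An MV-filter: a filter such that `x → y ∈ A` implies `((y → x) → x) → y ∈ A`. -/
def IsMVFilter (A : Set L) : Prop :=
  IsFilter' A ∧ ∀ x y : L, rimp x y ∈ A → rimp (rimp (rimp y x) x) y ∈ A

/-- A G-filter: a filter such that `(x ⊙ x) → y ∈ A` implies `x → y ∈ A`. -/
def IsGFilter (A : Set L) : Prop :=
  IsFilter' A ∧ ∀ x y : L, rimp (odot x x) y ∈ A → rimp x y ∈ A

lemma MTL.mp_le (x y : L) : odot (rimp x y) x ≤ y :=
  (galois _ _ _).mpr le_rfl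

lemma MTL.odot_le_left (x y : L) : odot x y ≤ x := by
  have h := odot_mono_right y ⊤ x le_top
  rwa [odot_top] at h

lemma MTL.rimp_eq_top_of_le {x y : L} (h : x ≤ y) : rimp x y = ⊤ := by
  refine le_antisymm le_top ?_
  rw [← galois, odot_comm, odot_top]
  exact h

lemma MTL.filter_up {A : Set L} (hA : IsFilter' A) {x y : L} (hx : x ∈ A) (h : x ≤ y) :
    y ∈ A :=
  hA.2 x y hx (by rw [rimp_eq_top_of_le h]; exact hA.1)

lemma MTL.rimp_mono_left {x y z : L} (h : x ≤ y) : rimp y z ≤ rimp x z :=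
  (galois _ _ _).mp (le_trans (odot_mono_right _ _ _ h) (mp_le y z))

/-- A Boolean filter is an MV-filter. -/
lemma MTL.boolean_isMV {A : Set L} (hb : IsBooleanFilter A) : IsMVFilter A := by
  refine ⟨hb.1, fun x y h => ?_⟩
  set c := rimp x y with hc
  set d := rimp (rimp y x) x with hd
  -- y ≤ c → (d → y)
  have h1 : y ≤ rimp c (rimp d y) := by
    rw [← galois, ← galois]
    exact le_trans (odot_le_left _ _) (odot_le_left _ _)
  -- y' ≤ c → (d → y)
  have h2 : rimp y ⊥ ≤ rimp c (rimp d y) := by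
    rw [← galois, ← galois]
    -- odot (odot (rimp y ⊥) c) d ≤ y
    have hy' : rimp y ⊥ ≤ rimp y x :=
      (galois _ _ _).mp (le_trans (mp_le y ⊥) bot_le)
    have hdy : odot d (rimp y ⊥) ≤ x :=
      le_trans (odot_mono_right _ _ _ hy') (mp_le (rimp y x) x)
    calc odot (odot (rimp y ⊥) c) d = odot (odot c (rimp y ⊥)) d := by rw [odot_comm c]
      _ = odot c (odot (rimp y ⊥) d) := odot_assoc _ _ _
      _ = odot c (odot d (rimp y ⊥)) := by rw [odot_comm d]
      _ ≤ odot c x := odot_mono_right _ _ _ hdy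
      _ ≤ y := mp_le x y
  have hsup : y ⊔ rimp y ⊥ ≤ rimp c (rimp d y) := sup_le h1 h2
  have hmem : rimp c (rimp d y) ∈ A := filter_up hb.1 (hb.2 y) hsup
  exact hb.1.2 c (rimp d y) h hmem

/-- A Boolean filter is a G-filter. -/
lemma MTL.boolean_isG {A : Set L} (hb : IsBooleanFilter A) : IsGFilter A := by
  refine ⟨hb.1, fun x y h => ?_⟩
  set c := rimp (odot x x) y with hc
  have h1 : x ≤ rimp c (rimp x y) := by
    rw [← galois, ← galois]
    calc odot (odot x c) x = odot (odot c x) x := by rw [odot_comm x c]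
      _ = odot c (odot x x) := odot_assoc _ _ _
      _ ≤ y := mp_le (odot x x) y
  have h2 : rimp x ⊥ ≤ rimp c (rimp x y) := by
    rw [← galois, ← galois]
    calc odot (odot (rimp x ⊥) c) x ≤ odot (rimp x ⊥) x :=
          odot_mono_left _ _ _ (odot_le_left _ _)
      _ ≤ ⊥ := mp_le x ⊥
      _ ≤ y := bot_le
  have hmem : rimp c (rimp x y) ∈ A := filter_up hb.1 (hb.2 x) (sup_le h1 h2)
  exact hb.1.2 c (rimp x y) h hmem

/-- An MV-filter which is also a G-filter is Boolean. -/
lemma MTL.mv_g_isBoolean {A : Set L} (hm : IsMVFilter A) (hg : IsGFilter A) :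
    IsBooleanFilter A := by
  refine ⟨hm.1, fun x => ?_⟩
  set u := x ⊔ rimp x ⊥ with hu
  set v := rimp u ⊥ with hv
  -- v ⊙ v ≤ ⊥
  have hvx : v ≤ rimp x ⊥ := rimp_mono_left le_sup_left
  have hvx' : v ≤ rimp (rimp x ⊥) ⊥ := rimp_mono_left le_sup_right
  have hvv : odot v v ≤ ⊥ :=
    le_trans (le_trans (odot_mono_left _ _ _ hvx') (odot_mono_right _ _ _ hvx))
      (mp_le (rimp x ⊥) ⊥)
  -- G-filter: (v ⊙ v) → ⊥ = ⊤ ∈ A, hence v → ⊥ ∈ A, i.e. u'' ∈ A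
  have h1 : rimp (odot v v) ⊥ ∈ A := by
    rw [rimp_eq_top_of_le hvv]; exact hm.1.1
  have h2 : rimp v ⊥ ∈ A := hg.2 v ⊥ h1
  -- MV-filter with x := ⊥, y := u : u'' → u ∈ A
  have h3 : rimp (rimp (rimp u ⊥) ⊥) u ∈ A := by
    refine hm.2 ⊥ u ?_
    rw [rimp_eq_top_of_le bot_le]; exact hm.1.1
  exact hm.1.2 (rimp v ⊥) u h2 h3

lemma MTL.boolean_iff (A : Set L) : IsBooleanFilter A ↔ IsMVFilter A ∧ IsGFilter A :=
  ⟨fun h => ⟨boolean_isMV h, boolean_isG h⟩, fun ⟨hm, hg⟩ => mv_g_isBoolean hm hg⟩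

theorem stmt_19 (A : Set L) (μ : L → ℝ) (hμ0 : ∀ x : L, 0 ≤ μ x) (hμ1 : ∀ x : L, μ x ≤ 1)
    (α β : ℝ) (hα : 0 < α) (hαβ : α < β) (hβ : β ≤ 1) :
    (IsBooleanFilter A ↔ IsMVFilter A ∧ IsGFilter A) ∧
      ((∀ t : ℝ, α < t → t ≤ β → ({x : L | t ≤ μ x} = ∅ ∨ IsBooleanFilter {x : L | t ≤ μ x})) ↔
        ((∀ t : ℝ, α < t → t ≤ β → ({x : L | t ≤ μ x} = ∅ ∨ IsMVFilter {x : L | t ≤ μ x})) ∧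
          (∀ t : ℝ, α < t → t ≤ β → ({x : L | t ≤ μ x} = ∅ ∨ IsGFilter {x : L | t ≤ μ x})))) := by
  refine ⟨MTL.boolean_iff A, ?_⟩
  constructor
  · intro h
    constructor <;> intro t ht1 ht2 <;> rcases h t ht1 ht2 with he | hb
    · exact Or.inl he
    · exact Or.inr ((MTL.boolean_iff _).mp hb).1
    · exact Or.inl he
    · exact Or.inr ((MTL.boolean_iff _).mp hb).2
  · rintro ⟨h1, h2⟩ t ht1 ht2
    rcases h1 t ht1 ht2 with he | hmv
    · exact Or.inl he
    rcases h2 t ht1 ht2 with he | hgf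
    · exact Or.inl he
    exact Or.inr ((MTL.boolean_iff _).mpr ⟨hmv, hgf⟩)
end
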